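/- Rate extraction from the summed recursion: let S_N ≥ 0 be nonincreasing with S_N → 0 and suppose S_N ≤ C'(S_{N-1} - S_N)^{(1-θ)/θ} + ½(S_{N-1}-S_N) for all N large and some θ ∈ (½, 1), C' > 0. Then S_N = O(N^{-(1-θ)/(2θ-1)}). -/

import Mathlib

open Filter Asymptotics

lemma aux_convex {r s : ℝ} (hr : 1 ≤ r) (hs : 1 ≤ s) :
    s ^ r - 1 ≤ r * s ^ (r - 1) * (s - 1) := by
  have hs0 : (0:ℝ) < s := lt_of_lt_of_le one_pos hs
  have hinv0 : (0:ℝ) < s⁻¹ := inv_pos.mpr hs0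
  have h1 : (-1:ℝ) ≤ s⁻¹ - 1 := by linarith
  have hb := one_add_mul_self_le_rpow_one_add h1 hr
  rw [show (1 + (s⁻¹ - 1)) = s⁻¹ by ring, Real.inv_rpow hs0.le] at hb
  have hsr : (0:ℝ) < s ^ r := Real.rpow_pos_of_pos hs0 r
  have hkey : s ^ r * (1 + r * (s⁻¹ - 1)) ≤ 1 := by
    calc s ^ r * (1 + r * (s⁻¹ - 1)) ≤ s ^ r * (s ^ r)⁻¹ :=
          mul_le_mul_of_nonneg_left hb hsr.le
      _ = 1 := mul_inv_cancel₀ hsr.ne'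
  have hsr1 : s ^ (r - 1) * s = s ^ r := by
    rw [← Real.rpow_add_one hs0.ne' (r - 1)]; ring_nf
  have hinv : s ^ r * s⁻¹ = s ^ (r - 1) := by
    rw [← hsr1]; field_simp
  calc s ^ r - 1 ≤ r * s ^ r - r * (s ^ r * s⁻¹) := by nlinarith [hkey]
    _ = r * s ^ (r-1) * s - r * s ^ (r-1) := by rw [hinv, ← hsr1]; ring
    _ = r * s ^ (r - 1) * (s - 1) := by ring

lemma aux_bernoulli_lower {p X : ℝ} (hp : 0 < p) (hX : 0 < X) :
    ∃ q > 0, ∀ x : ℝ, 0 ≤ x → x ≤ X → 1 + q * x ≤ (1 + x) ^ p := by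
  rcases le_or_gt 1 p with hp1 | hp1
  · exact ⟨p, hp, fun x hx0 _ => one_add_mul_self_le_rpow_one_add (by linarith) hp1⟩
  · have hQ : (0:ℝ) < (1 + X) ^ (1 - p) := Real.rpow_pos_of_pos (by linarith) _
    refine ⟨p / (1 + X) ^ (1 - p), by positivity, fun x hx0 hxX => ?_⟩
    set s := (1 + x) ^ p with hsdef
    have h1x : (0:ℝ) < 1 + x := by linarith
    have hs1 : 1 ≤ s := Real.one_le_rpow (by linarith) hp.le
    have hsr : s ^ (1/p) = 1 + x := by
      rw [hsdef, ← Real.rpow_mul h1x.le, mul_one_div, div_self hp.ne', Real.rpow_one]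
    have hB := aux_convex (r := 1/p) (s := s) (by rw [le_div_iff₀ hp]; linarith) hs1
    rw [hsr] at hB
    have hsp : s ^ (1/p - 1) = (1 + x) ^ (1 - p) := by
      rw [hsdef, ← Real.rpow_mul h1x.le]
      congr 1
      field_simp
    have hle : (1 + x) ^ (1 - p) ≤ (1 + X) ^ (1 - p) :=
      Real.rpow_le_rpow h1x.le (by linarith) (by linarith)
    have hB' : x ≤ 1/p * ((1 + X) ^ (1 - p)) * (s - 1) := by
      have h6 : s ^ (1/p - 1) * (s - 1) ≤ (1 + X) ^ (1 - p) * (s - 1) := by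
        apply mul_le_mul_of_nonneg_right _ (by linarith)
        rw [hsp]; exact hle
      have h7 := mul_le_mul_of_nonneg_left h6 (le_of_lt (one_div_pos.mpr hp))
      nlinarith [hB, h7]
    have key : p / (1 + X) ^ (1 - p) * x ≤ s - 1 := by
      rw [div_mul_eq_mul_div, div_le_iff₀ hQ]
      have := mul_le_mul_of_nonneg_left hB' hp.le
      calc p * x ≤ p * (1/p * ((1 + X) ^ (1 - p)) * (s - 1)) := this
        _ = (s - 1) * (1 + X) ^ (1 - p) := by field_simp
    linarith

set_option maxHeartbeats 1000000 in
theorem sublinear_rate_from_recursion (S : ℕ → ℝ)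
    (hnn : ∀ N, 0 ≤ S N) (hanti : Antitone S)
    (hlim : Tendsto S atTop (nhds 0))
    (θ C' : ℝ) (hθ1 : 1 / 2 < θ) (hθ2 : θ < 1) (hC : 0 < C') (N₀ : ℕ)
    (hrec : ∀ N ≥ N₀, S (N + 1) ≤
      C' * (S N - S (N + 1)) ^ ((1 - θ) / θ) + (1 / 2) * (S N - S (N + 1))) :
    (fun N : ℕ => S N) =O[atTop]
      (fun N : ℕ => (N : ℝ) ^ (-((1 - θ) / (2 * θ - 1)))) := by
  have hθ0 : (0:ℝ) < θ := by linarith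
  have h1θ : (0:ℝ) < 1 - θ := by linarith
  have h2θ : (0:ℝ) < 2 * θ - 1 := by linarith
  set γ : ℝ := (1 - θ) / (2 * θ - 1) with hγdef
  have hγ : 0 < γ := by positivity
  by_cases hzero : ∃ M, S M = 0
  · -- trivial case: S is eventually 0
    obtain ⟨M, hM⟩ := hzero
    rw [isBigO_iff]
    refine ⟨1, ?_⟩
    filter_upwards [eventually_ge_atTop M] with N hN
    have hSN : S N = 0 := le_antisymm (hM ▸ hanti hN) (hnn N)
    rw [hSN, norm_zero]
    positivity
  · push_neg at hzero
    have hpos : ∀ M, 0 < S M := fun M => lt_of_le_of_ne (hnn M) (Ne.symm (hzero M))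
    set α : ℝ := (1 - θ) / θ with hαdef
    have hα0 : 0 < α := by positivity
    have hα1 : α < 1 := by rw [hαdef, div_lt_one hθ0]; linarith
    set p : ℝ := (2 * θ - 1) / (1 - θ) with hpdef
    have hp0 : 0 < p := by positivity
    have hγp : γ * p = 1 := by
      rw [hγdef, hpdef]; field_simp; exact div_self (by linarith)
    have hαβ : α * (p + 1) = 1 := by
      rw [hαdef, hpdef]; field_simp; ring
    have hβ1 : (1:ℝ) ≤ p + 1 := by linarith
    set K : ℝ := C' + 1/2 with hKdef
    have hK0 : (0:ℝ) < K := by rw [hKdef]; linarith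
    set c : ℝ := (K ^ (p+1))⁻¹ with hcdef
    have hc0 : 0 < c := by
      rw [hcdef]; exact inv_pos.mpr (Real.rpow_pos_of_pos hK0 _)
    -- choose N₁ ≥ N₀ with S N ≤ 1 for N ≥ N₁
    obtain ⟨N₂, hN₂⟩ := (eventually_atTop).mp
      (hlim.eventually_lt_const (show (0:ℝ) < 1 by norm_num))
    set N₁ : ℕ := max N₀ N₂ with hN₁def
    have hN₁N₀ : N₀ ≤ N₁ := le_max_left _ _
    have hS1 : ∀ N ≥ N₁, S N ≤ 1 := fun N hN =>
      (hN₂ N (le_trans (le_max_right _ _) hN)).le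
    -- main recursion consequence
    have hd : ∀ N ≥ N₁, c * S (N + 1) ^ (p + 1) ≤ S N - S (N + 1) := by
      intro N hN
      set d : ℝ := S N - S (N + 1) with hddef
      have hd0 : 0 ≤ d := by
        have := hanti (Nat.le_succ N); rw [hddef]; linarith
      have hrecN := hrec N (le_trans hN₁N₀ hN)
      have hdpos : 0 < d := by
        rcases eq_or_lt_of_le hd0 with h | h
        · exfalso
          rw [← hddef, ← h, Real.zero_rpow hα0.ne'] at hrecN
          have := hpos (N + 1); linarith
        · exact h
      have hd1 : d ≤ 1 := by
        have h1 := hS1 N hN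
        have h2 := hnn (N + 1)
        rw [hddef]; linarith
      have hdα : d ≤ d ^ α := by
        have := Real.rpow_le_rpow_of_exponent_ge hdpos hd1 hα1.le
        rwa [Real.rpow_one] at this
      have hKd : S (N + 1) ≤ K * d ^ α := by
        rw [hKdef]
        have hda : (0:ℝ) ≤ d ^ α := Real.rpow_nonneg hd0 α
        nlinarith [hrecN]
      have h3 : S (N + 1) ^ (p+1) ≤ K ^ (p+1) * d := by
        calc S (N + 1) ^ (p+1) ≤ (K * d ^ α) ^ (p+1) :=
              Real.rpow_le_rpow (hnn _) hKd (by linarith)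
          _ = K ^ (p+1) * (d ^ α) ^ (p+1) :=
              Real.mul_rpow hK0.le (Real.rpow_nonneg hd0 α)
          _ = K ^ (p+1) * d := by
              rw [← Real.rpow_mul hd0, hαβ, Real.rpow_one]
      calc c * S (N + 1) ^ (p+1) ≤ c * (K ^ (p+1) * d) :=
            mul_le_mul_of_nonneg_left h3 hc0.le
        _ = d := by
            rw [hcdef]
            field_simp
    -- uniform increment for u N = S N ^ (-p)
    have hincr : ∃ ε > 0, ∀ N ≥ N₁, S N ^ (-p) + ε ≤ S (N + 1) ^ (-p) := by
      set X : ℝ := c * 2 ^ (-p) * S N₁ ^ p with hXdef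
      have h2p : (0:ℝ) < 2 ^ (-p) := Real.rpow_pos_of_pos two_pos _
      have hX0 : 0 < X := by
        rw [hXdef]
        exact mul_pos (mul_pos hc0 h2p) (Real.rpow_pos_of_pos (hpos N₁) p)
      obtain ⟨q, hq0, hber⟩ := aux_bernoulli_lower hp0 hX0
      have h2p1 : (1:ℝ) < 2 ^ p := by
        have := Real.rpow_lt_rpow_of_exponent_lt (show (1:ℝ) < 2 by norm_num) hp0
        simpa using this
      have huN₁ : (0:ℝ) < S N₁ ^ (-p) := Real.rpow_pos_of_pos (hpos N₁) _
      refine ⟨min ((2 ^ p - 1) * S N₁ ^ (-p)) (q * (c * 2 ^ (-p))), ?_, ?_⟩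
      · apply lt_min
        · exact mul_pos (by linarith) huN₁
        · exact mul_pos hq0 (mul_pos hc0 h2p)
      intro N hN
      have huNmono : S N₁ ^ (-p) ≤ S N ^ (-p) :=
        Real.rpow_le_rpow_of_nonpos (hpos N) (hanti hN) (by linarith)
      rcases le_or_gt (2 * S (N + 1)) (S N) with hcase | hcase
      · -- big drop case
        have h1 : (S N / 2) ^ (-p) ≤ S (N + 1) ^ (-p) :=
          Real.rpow_le_rpow_of_nonpos (hpos (N+1)) (by linarith) (by linarith)
        have h2 : (S N / 2) ^ (-p) = S N ^ (-p) * 2 ^ p := by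
          rw [Real.div_rpow (hnn N) (by norm_num), Real.rpow_neg (by norm_num : (0:ℝ) ≤ 2),
            div_eq_mul_inv, inv_inv]
        have h3 : S N ^ (-p) + (2 ^ p - 1) * S N₁ ^ (-p) ≤ S N ^ (-p) * 2 ^ p := by
          have h4 : (2 ^ p - 1) * S N₁ ^ (-p) ≤ (2 ^ p - 1) * S N ^ (-p) :=
            mul_le_mul_of_nonneg_left huNmono (by linarith)
          nlinarith
        have h5 := min_le_left ((2 ^ p - 1) * S N₁ ^ (-p)) (q * (c * 2 ^ (-p)))
        linarith
      · -- slow drop case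
        set x : ℝ := c * 2 ^ (-p) * S N ^ p with hxdef
        have hx0 : 0 ≤ x := le_of_lt
          (mul_pos (mul_pos hc0 h2p) (Real.rpow_pos_of_pos (hpos N) p))
        have hxX : x ≤ X := by
          rw [hxdef, hXdef]
          exact mul_le_mul_of_nonneg_left
            (Real.rpow_le_rpow (hnn N) (hanti hN) hp0.le)
            (by positivity)
        have h1x : (0:ℝ) < 1 + x := by linarith
        -- S N ≥ S(N+1) * (1+x)
        have hSS : S (N + 1) * (1 + x) ≤ S N := by
          have hdN := hd N hN
          have hpow : S (N + 1) ^ (p + 1) = S (N + 1) ^ p * S (N + 1) := by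
            rw [Real.rpow_add (hpos (N+1)), Real.rpow_one]
          have hcomp : (S N / 2) ^ p ≤ S (N + 1) ^ p :=
            Real.rpow_le_rpow (div_nonneg (hnn N) (by norm_num)) (by linarith) hp0.le
          have hhalf : (S N / 2) ^ p = S N ^ p * 2 ^ (-p) := by
            rw [Real.div_rpow (hnn N) (by norm_num), Real.rpow_neg (by norm_num : (0:ℝ) ≤ 2),
              div_eq_mul_inv]
          have hx_le : x * S (N + 1) ≤ c * S (N + 1) ^ (p + 1) := by
            rw [hxdef, hpow]
            have : S N ^ p * 2 ^ (-p) ≤ S (N + 1) ^ p := by rw [← hhalf]; exact hcomp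
            have h9 : c * (S N ^ p * 2 ^ (-p)) * S (N+1) ≤ c * S (N + 1) ^ p * S (N+1) := by
              apply mul_le_mul_of_nonneg_right _ (hnn (N+1))
              exact mul_le_mul_of_nonneg_left this hc0.le
            calc c * 2 ^ (-p) * S N ^ p * S (N + 1)
                = c * (S N ^ p * 2 ^ (-p)) * S (N+1) := by ring
              _ ≤ c * S (N + 1) ^ p * S (N+1) := h9
              _ = c * (S (N + 1) ^ p * S (N + 1)) := by ring
          nlinarith [hdN, hx_le]
        have hdiv : S (N + 1) ≤ S N / (1 + x) := by
          rw [le_div_iff₀ h1x]; exact hSS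
        have h1 : (S N / (1 + x)) ^ (-p) ≤ S (N + 1) ^ (-p) :=
          Real.rpow_le_rpow_of_nonpos (hpos (N+1)) hdiv (by linarith)
        have h2 : (S N / (1 + x)) ^ (-p) = S N ^ (-p) * (1 + x) ^ p := by
          rw [Real.div_rpow (hnn N) h1x.le, Real.rpow_neg h1x.le, div_eq_mul_inv, inv_inv]
        have h3 : 1 + q * x ≤ (1 + x) ^ p := hber x hx0 hxX
        have h4 : S N ^ (-p) * (1 + q * x) ≤ S N ^ (-p) * (1 + x) ^ p :=
          mul_le_mul_of_nonneg_left h3 (Real.rpow_nonneg (hnn N) _)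
        have h5 : S N ^ (-p) * x = c * 2 ^ (-p) := by
          rw [hxdef]
          have : S N ^ (-p) * S N ^ p = 1 := by
            rw [← Real.rpow_add (hpos N)]
            simp
          calc S N ^ (-p) * (c * 2 ^ (-p) * S N ^ p)
              = c * 2 ^ (-p) * (S N ^ (-p) * S N ^ p) := by ring
            _ = c * 2 ^ (-p) := by rw [this, mul_one]
        have h6 := min_le_right ((2 ^ p - 1) * S N₁ ^ (-p)) (q * (c * 2 ^ (-p)))
        have h7 : S N ^ (-p) * (1 + q * x) = S N ^ (-p) + q * (c * 2 ^ (-p)) := by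
          rw [mul_add, mul_one]
          congr 1
          rw [← h5]; ring
        linarith [h1, h2 ▸ h4, h7 ▸ h4]
    obtain ⟨ε, hε0, hkey⟩ := hincr
    -- growth by induction
    have hgrow : ∀ k : ℕ, S N₁ ^ (-p) + ε * k ≤ S (N₁ + k) ^ (-p) := by
      intro k
      induction k with
      | zero => simp
      | succ k ih =>
        have := hkey (N₁ + k) (Nat.le_add_right _ _)
        push_cast
        have hc : (N₁ + (k + 1)) = (N₁ + k) + 1 := by omega
        rw [hc]
        push_cast at ih
        linarith
    have huN₁ : (0:ℝ) < S N₁ ^ (-p) := Real.rpow_pos_of_pos (hpos N₁) _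
    -- final bound
    rw [isBigO_iff]
    refine ⟨(ε / 2) ^ (-γ), ?_⟩
    filter_upwards [eventually_ge_atTop (2 * N₁ + 1)] with N hN
    have hN1 : N₁ ≤ N := by omega
    obtain ⟨k, hk⟩ : ∃ k, N = N₁ + k := ⟨N - N₁, by omega⟩
    have hgN : ε * ((N:ℝ) - N₁) ≤ S N ^ (-p) := by
      have := hgrow k
      rw [← hk] at this
      have hcast : (k:ℝ) = (N:ℝ) - (N₁:ℝ) := by
        rw [hk]; push_cast; ring
      rw [hcast] at this
      linarith
    have hNhalf : (N:ℝ) / 2 ≤ (N:ℝ) - N₁ := by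
      have h1 : (2 * N₁ + 1 : ℕ) ≤ N := hN
      have h2 : (2 * (N₁:ℝ) + 1) ≤ (N:ℝ) := by exact_mod_cast h1
      linarith
    have hNpos : (0:ℝ) < N := by
      have : (1:ℕ) ≤ N := by omega
      exact_mod_cast Nat.lt_of_lt_of_le Nat.zero_lt_one this
    have hlow : ε * ((N:ℝ) / 2) ≤ S N ^ (-p) := by
      have := mul_le_mul_of_nonneg_left hNhalf hε0.le
      linarith
    have hlowpos : (0:ℝ) < ε * ((N:ℝ) / 2) := by positivity
    -- invert
    have hinvert : S N ≤ (ε * ((N:ℝ) / 2)) ^ (-γ) := by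
      have h1 : (S N ^ (-p)) ^ (-γ) ≤ (ε * ((N:ℝ) / 2)) ^ (-γ) :=
        Real.rpow_le_rpow_of_nonpos hlowpos hlow (by linarith)
      have h2 : (S N ^ (-p)) ^ (-γ) = S N := by
        rw [← Real.rpow_mul (hnn N)]
        have : -p * -γ = 1 := by rw [neg_mul_neg]; linarith [hγp]; 
        rw [this, Real.rpow_one]
      rwa [h2] at h1
    have hsplit : (ε * ((N:ℝ) / 2)) ^ (-γ) = (ε / 2) ^ (-γ) * (N:ℝ) ^ (-γ) := by
      rw [show ε * ((N:ℝ) / 2) = (ε / 2) * (N:ℝ) by ring,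
        Real.mul_rpow (by positivity) hNpos.le]
    rw [Real.norm_of_nonneg (hnn N), Real.norm_of_nonneg (Real.rpow_nonneg hNpos.le _)]
    rw [hsplit] at hinvert
    exact hinvert
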